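/- arXiv:math/0601399 — 5 statements merged into one kernel-verified Lean document; each statement's English description precedes it below -/
import Mathlib

section
/- Let R be a commutative ring, g ≥ 2 an integer, and ε ∈ R with ε^(2g+2) = 1. For any tuple (a_1, …, a_g) of elements of R, define b_i := ε^(2i)·a_i for 1 ≤ i ≤ g. Then the dihedral invariants of (b_1, …, b_g) coincide with those of (a_1, …, a_g), i.e. b_1^(g-i+1)·b_i + b_g^(g-i+1)·b_{g+1-i} = a_1^(g-i+1)·a_i + a_g^(g-i+1)·a_{g+1-i} for every 1 ≤ i ≤ g. -/
/-- the dihedral invariants are preserved under the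
transformation `τ₁ : aᵢ ↦ ε^(2i)·aᵢ` where `ε^(2g+2) = 1`. -/
theorem dihedral_invariants_tau1_invariant {R : Type*} [CommRing R]
    (g : ℕ) (hg : 2 ≤ g) (ε : R) (hε : ε ^ (2 * g + 2) = 1)
    (a b : ℕ → R) (hb : ∀ i, 1 ≤ i → i ≤ g → b i = ε ^ (2 * i) * a i) :
    ∀ i, 1 ≤ i → i ≤ g →
      b 1 ^ (g - i + 1) * b i + b g ^ (g - i + 1) * b (g + 1 - i)
        = a 1 ^ (g - i + 1) * a i + a g ^ (g - i + 1) * a (g + 1 - i) := by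
  intro i hi1 hig
  obtain ⟨k, rfl⟩ : ∃ k, g = i + k := ⟨g - i, by omega⟩
  rw [show i + k - i + 1 = k + 1 from by omega,
      show i + k + 1 - i = k + 1 from by omega,
      hb 1 le_rfl (by omega), hb i hi1 (by omega),
      hb (i + k) (by omega) le_rfl, hb (k + 1) (by omega) (by omega)]
  have e1 : (ε ^ (2 * 1) * a 1) ^ (k + 1) * (ε ^ (2 * i) * a i)
      = ε ^ (2 * 1 * (k + 1) + 2 * i) * (a 1 ^ (k + 1) * a i) := by
    rw [mul_pow, ← pow_mul, pow_add]; ring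
  have e2 : (ε ^ (2 * (i + k)) * a (i + k)) ^ (k + 1) * (ε ^ (2 * (k + 1)) * a (k + 1))
      = ε ^ (2 * (i + k) * (k + 1) + 2 * (k + 1)) * (a (i + k) ^ (k + 1) * a (k + 1)) := by
    rw [mul_pow, ← pow_mul, pow_add]; ring
  rw [e1, e2,
      show 2 * 1 * (k + 1) + 2 * i = 2 * (i + k) + 2 from by ring,
      show 2 * (i + k) * (k + 1) + 2 * (k + 1) = (2 * (i + k) + 2) * (k + 1) from by ring,
      pow_mul, hε, one_pow, one_mul, one_mul]
end

section
/- Let k be a field of characteristic zero, g ≥ 2 an integer, and u_1, …, u_g ∈ k with u_1 ≠ 0. Let b ∈ k satisfy b^(g+1) = u_1/2, and define a_g := b and a_i := (u_{g+1-i}/u_1)·b^(g+1-i) for 1 ≤ i ≤ g−1 (so a_1 = (u_g/u_1)·b^g). Then the first and last dihedral invariants of the tuple (a_1, …, a_g) are a_1^(g+1) + a_g^(g+1) = (2^(g-1)·u_1² + u_g^(g+1))/(2^g·u_1) and 2·a_1·a_g = u_g. -/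
/-- the first and last dihedral invariants of the normal form of
the model curve `Y² = u₁X^(2g+2) + u₁X^(2g) + u₂X^(2g-2) + … + u_gX² + 2` are
`a₁^(g+1) + a_g^(g+1) = (2^(g-1)u₁² + u_g^(g+1))/(2^g·u₁)` and
`2a₁a_g = u_g`. -/
theorem dihedral_invariants_of_rescaled_model {k : Type*} [Field k] [CharZero k]
    (g : ℕ) (hg : 2 ≤ g) (u : ℕ → k) (hu : u 1 ≠ 0) (b : k)
    (hb : b ^ (g + 1) = u 1 / 2) (a : ℕ → k) (hag : a g = b)
    (ha : ∀ i, 1 ≤ i → i ≤ g - 1 → a i = u (g + 1 - i) / u 1 * b ^ (g + 1 - i)) :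
    a 1 ^ (g + 1) + a g ^ (g + 1)
        = (2 ^ (g - 1) * u 1 ^ 2 + u g ^ (g + 1)) / (2 ^ g * u 1)
      ∧ 2 * a 1 * a g = u g := by
  obtain ⟨m, rfl⟩ : ∃ m, g = m + 2 := ⟨g - 2, by omega⟩
  have ha1 : a 1 = u (m + 2) / u 1 * b ^ (m + 2) := by
    have h := ha 1 le_rfl (by omega)
    simpa using h
  have h2 : (2 : k) ≠ 0 := two_ne_zero
  have key : (b ^ (m + 2)) ^ (m + 2 + 1) = (u 1 / 2) ^ (m + 2) := by
    rw [← pow_mul, Nat.mul_comm, pow_mul, hb]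
  constructor
  · rw [ha1, hag, mul_pow, key, hb]
    rw [show m + 2 - 1 = m + 1 from rfl, div_pow, div_pow]
    field_simp
    ring
  · rw [ha1, hag]
    have : u (m + 2) / u 1 * b ^ (m + 2) * b = u (m + 2) / u 1 * b ^ (m + 2 + 1) := by
      ring
    rw [mul_assoc, this, hb]
    field_simp
end

section
/- Let k be a field of characteristic zero, g ≥ 2 an integer, and u_1, …, u_g ∈ k with u_1 ≠ 0 and 2^(g-1)·u_1² = u_g^(g+1). Let b ∈ k satisfy b^(g+1) = u_1/2, and define a_g := b and a_i := (u_{g+1-i}/u_1)·b^(g+1-i) for 1 ≤ i ≤ g−1. Then the first and last dihedral invariants of (a_1, …, a_g) satisfy a_1^(g+1) + a_g^(g+1) = u_1 and 2·a_1·a_g = u_g. -/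
/-- if moreover `2^(g-1)u₁² = u_g^(g+1)`, then the first and last
dihedral invariants of the normal form of the model curve recover `u₁` and
`u_g`, i.e. the model curve is a representative of the moduli point. -/
theorem dihedral_invariants_of_rescaled_model_on_locus {k : Type*} [Field k]
    [CharZero k] (g : ℕ) (hg : 2 ≤ g) (u : ℕ → k) (hu : u 1 ≠ 0)
    (hlocus : 2 ^ (g - 1) * u 1 ^ 2 = u g ^ (g + 1)) (b : k)
    (hb : b ^ (g + 1) = u 1 / 2) (a : ℕ → k) (hag : a g = b)
    (ha : ∀ i, 1 ≤ i → i ≤ g - 1 → a i = u (g + 1 - i) / u 1 * b ^ (g + 1 - i)) :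
    a 1 ^ (g + 1) + a g ^ (g + 1) = u 1 ∧ 2 * a 1 * a g = u g := by
  obtain ⟨m, rfl⟩ : ∃ m, g = m + 2 := ⟨g - 2, by omega⟩
  have h2 : (2 : k) ≠ 0 := two_ne_zero
  have ha1 : a 1 = u (m + 2) / u 1 * b ^ (m + 2) := by
    have := ha 1 le_rfl (by omega)
    simpa using this
  have hlocus' : 2 ^ (m + 1) * u 1 ^ 2 = u (m + 2) ^ (m + 3) := by
    simpa using hlocus
  have key : a 1 ^ (m + 3) = u 1 / 2 := by
    rw [ha1, mul_pow, div_pow, ← pow_mul, mul_comm (m + 2) (m + 3), pow_mul, hb,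
      ← hlocus']
    field_simp
    rw [div_pow, mul_div_assoc', div_eq_iff (pow_ne_zero _ h2)]; ring
  constructor
  · rw [show m + 2 + 1 = m + 3 from rfl, key, hag, hb]; ring
  · rw [ha1, hag]
    field_simp
    linear_combination 2 * u (m + 2) * hb
end

section
/- Let k be a field of characteristic zero, g ≥ 3 an odd integer, n := (g+1)/2, and λ_1, …, λ_n ∈ k with s := λ_1 + … + λ_n. Write ∏_{i=1}^{n} (X⁴ − λ_i·X² + 1) = X^(2g+2) + a_g·X^(2g) + … + a_1·X² + 1. Then the first and last dihedral invariants of (a_1, …, a_g) satisfy u_1 = a_1^(g+1) + a_g^(g+1) = 2·s^(g+1) and u_g = 2·a_1·a_g = 2·s², and consequently 2^(g-1)·u_1² − u_g^(g+1) = 0, so that (2^(g-1)·u_1² + u_g^(g+1))·(2^(g-1)·u_1² − u_g^(g+1)) = 0. -/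
open Polynomial Finset

lemma prod_deg_le {k : Type*} [CommRing k] (lam : ℕ → k) (N : ℕ) :
    (∏ i ∈ Finset.range N, (X ^ 4 - C (lam i) * X ^ 2 + 1)).natDegree ≤ 4 * N := by
  refine le_trans (natDegree_prod_le _ _) ?_
  refine le_trans (Finset.sum_le_card_nsmul _ _ 4 ?_) (by simp [mul_comm])
  intro i _
  compute_degree

lemma prod_coeff_facts {k : Type*} [CommRing k] (lam : ℕ → k) :
    ∀ n : ℕ, 1 ≤ n →
      ((∏ i ∈ Finset.range n, (X ^ 4 - C (lam i) * X ^ 2 + 1)).coeff 0 = 1) ∧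
      ((∏ i ∈ Finset.range n, (X ^ 4 - C (lam i) * X ^ 2 + 1)).coeff (4 * n) = 1) ∧
      ((∏ i ∈ Finset.range n, (X ^ 4 - C (lam i) * X ^ 2 + 1)).coeff 2
          = -∑ i ∈ Finset.range n, lam i) ∧
      ((∏ i ∈ Finset.range n, (X ^ 4 - C (lam i) * X ^ 2 + 1)).coeff (4 * n - 2)
          = -∑ i ∈ Finset.range n, lam i) := by
  intro n hn
  induction n, hn using Nat.le_induction with
  | base =>
      simp only [Finset.prod_range_one, Finset.sum_range_one]
      refine ⟨?_, ?_, ?_, ?_⟩ <;>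
        simp [coeff_one, coeff_X_pow, coeff_C_mul, coeff_add, coeff_sub]
  | succ m hm ih =>
      obtain ⟨h0, htop, h2, hsub⟩ := ih
      set P := ∏ i ∈ Finset.range m, (X ^ 4 - C (lam i) * X ^ 2 + 1) with hP
      have hdeg := prod_deg_le lam m
      have hprod : (∏ i ∈ Finset.range (m+1), (X ^ 4 - C (lam i) * X ^ 2 + 1))
          = P * X ^ 4 - C (lam m) * (P * X ^ 2) + P := by
        rw [Finset.prod_range_succ]; ring
      have hzero : ∀ j, 4 * m < j → P.coeff j = 0 := fun j hj =>
        coeff_eq_zero_of_natDegree_lt (lt_of_le_of_lt hdeg hj)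
      refine ⟨?_, ?_, ?_, ?_⟩ <;> rw [hprod] <;>
        simp only [coeff_add, coeff_sub, coeff_C_mul, coeff_mul_X_pow']
      · norm_num [h0]
      · have e1 : 4 * (m+1) - 4 = 4 * m := by omega
        have e2 : 4 * (m+1) - 2 = 4 * m + 2 := by omega
        rw [if_pos (by omega : (4:ℕ) ≤ 4*(m+1)), if_pos (by omega : (2:ℕ) ≤ 4*(m+1)),
          e1, e2, htop, hzero _ (by omega), hzero _ (by omega)]
        ring
      · norm_num [h0, h2, Finset.sum_range_succ]
      · have e1 : 4 * (m+1) - 2 - 4 = 4 * m - 2 := by omega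
        have e2 : 4 * (m+1) - 2 - 2 = 4 * m := by omega
        rw [if_pos (by omega : (4:ℕ) ≤ 4*(m+1)-2), if_pos (by omega : (2:ℕ) ≤ 4*(m+1)-2),
          e1, e2, hsub, htop, hzero _ (by omega), Finset.sum_range_succ]
        ring

/-- for `g ≥ 3` odd, writing
`∏ᵢ (X⁴ − λᵢX² + 1) = X^(2g+2) + a_gX^(2g) + … + a₁X² + 1` and
`s = λ₁ + … + λₙ`, the dihedral invariants satisfy `u₁ = 2s^(g+1)`,
`u_g = 2s²`, hence `2^(g-1)u₁² − u_g^(g+1) = 0` and the Jacobian determinant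
`(2^(g-1)u₁² + u_g^(g+1))(2^(g-1)u₁² − u_g^(g+1))` vanishes. -/
theorem two_involutions_locus_odd_genus {k : Type*} [Field k] [CharZero k]
    (g : ℕ) (hg : 3 ≤ g) (hodd : Odd g) (n : ℕ) (hn : n = (g + 1) / 2)
    (lam : ℕ → k) (s : k) (hs : s = ∑ i ∈ Finset.range n, lam i)
    (a : ℕ → k)
    (ha : (∏ i ∈ Finset.range n, (X ^ 4 - C (lam i) * X ^ 2 + 1))
        = X ^ (2 * g + 2) + (∑ i ∈ Finset.Icc 1 g, C (a i) * X ^ (2 * i)) + 1)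
    (u₁ ug : k)
    (hu₁ : u₁ = a 1 ^ (g + 1) + a g ^ (g + 1)) (hug : ug = 2 * a 1 * a g) :
    u₁ = 2 * s ^ (g + 1) ∧ ug = 2 * s ^ 2 ∧
      2 ^ (g - 1) * u₁ ^ 2 - ug ^ (g + 1) = 0 ∧
      (2 ^ (g - 1) * u₁ ^ 2 + ug ^ (g + 1)) *
        (2 ^ (g - 1) * u₁ ^ 2 - ug ^ (g + 1)) = 0 := by
  obtain ⟨m, hm⟩ := hodd
  have hn' : n = m + 1 := by omega
  have h4n : 4 * n = 2 * g + 2 := by omega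
  have h4n2 : 4 * n - 2 = 2 * g := by omega
  obtain ⟨h0, htop, h2, hsub⟩ := prod_coeff_facts lam n (by omega)
  have key : ∀ c : ℕ, 0 < c → c ≤ g →
      (∑ i ∈ Finset.Icc 1 g, C (a i) * X ^ (2 * i)).coeff (2 * c) = a c := by
    intro c hc hcg
    rw [finset_sum_coeff, Finset.sum_eq_single c]
    · rw [coeff_C_mul, coeff_X_pow, if_pos rfl, mul_one]
    · intro i _ hne
      rw [coeff_C_mul, coeff_X_pow, if_neg (by omega), mul_zero]
    · intro h
      exact absurd (Finset.mem_Icc.mpr ⟨hc, hcg⟩) h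
  have hA1 : a 1 = -s := by
    have h := congrArg (fun p => p.coeff 2) ha
    simp only [coeff_add] at h
    rw [h2, coeff_X_pow, if_neg (by omega), coeff_one, if_neg (by omega),
      show (2:ℕ) = 2 * 1 by rfl, key 1 one_pos (by omega)] at h
    rw [← hs] at h
    linear_combination -h
  have hAg : a g = -s := by
    have h := congrArg (fun p => p.coeff (2 * g)) ha
    simp only [coeff_add] at h
    rw [h4n2] at hsub
    rw [hsub, coeff_X_pow, if_neg (by omega), coeff_one, if_neg (by omega),
      key g (by omega) le_rfl] at h
    rw [← hs] at h
    linear_combination -h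
  have heven : Even (g + 1) := by
    refine ⟨m + 1, by omega⟩
  have hU1 : u₁ = 2 * s ^ (g + 1) := by
    rw [hu₁, hA1, hAg, heven.neg_pow]; ring
  have hUg : ug = 2 * s ^ 2 := by
    rw [hug, hA1, hAg]; ring
  refine ⟨hU1, hUg, ?_, ?_⟩
  · rw [hU1, hUg]
    have e : (2:k) ^ (g - 1) * 2 ^ 2 = 2 ^ (g + 1) := by
      rw [← pow_add]; congr 1; omega
    rw [mul_pow, mul_pow, ← mul_assoc, e, ← pow_mul, ← pow_mul, mul_comm (g+1) 2]
    ring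
  · rw [hU1, hUg]
    have e : (2:k) ^ (g - 1) * 2 ^ 2 = 2 ^ (g + 1) := by
      rw [← pow_add]; congr 1; omega
    rw [mul_pow, mul_pow, ← mul_assoc, e, ← pow_mul, ← pow_mul, mul_comm (g+1) 2]
    ring
end

section
/- Let k be a field of characteristic zero, g ≥ 2 an even integer, n := g/2, and λ_1, …, λ_n ∈ k with s := λ_1 + … + λ_n. Write (X² + 1)·∏_{i=1}^{n} (X⁴ − λ_i·X² + 1) = X^(2g+2) + a_g·X^(2g) + … + a_1·X² + 1. Then the first and last dihedral invariants of (a_1, …, a_g) satisfy u_1 = a_1^(g+1) + a_g^(g+1) = 2·(1−s)^(g+1) and u_g = 2·a_1·a_g = 2·(1−s)², and consequently 2^(g-1)·u_1² − u_g^(g+1) = 0. -/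
open Polynomial Finset

lemma aux_coeff_mul {k : Type*} [Field k] (q : k[X]) (lam : k) (d : ℕ) :
    (q * (X ^ 4 - C lam * X ^ 2 + 1)).coeff d
      = (if 4 ≤ d then q.coeff (d - 4) else 0)
        - lam * (if 2 ≤ d then q.coeff (d - 2) else 0) + q.coeff d := by
  have h : q * (X ^ 4 - C lam * X ^ 2 + 1) = q * X ^ 4 - C lam * (q * X ^ 2) + q := by ring
  rw [h]
  simp [coeff_mul_X_pow', coeff_C_mul]

lemma aux_key {k : Type*} [Field k] (lam : ℕ → k) : ∀ m : ℕ,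
    (∏ i ∈ Finset.range m, ((X : k[X]) ^ 4 - C (lam i) * X ^ 2 + 1)).coeff 0 = 1 ∧
    (∏ i ∈ Finset.range m, ((X : k[X]) ^ 4 - C (lam i) * X ^ 2 + 1)).coeff 1 = 0 ∧
    (∏ i ∈ Finset.range m, ((X : k[X]) ^ 4 - C (lam i) * X ^ 2 + 1)).coeff 2
      = -(∑ i ∈ Finset.range m, lam i) ∧
    (∏ i ∈ Finset.range m, ((X : k[X]) ^ 4 - C (lam i) * X ^ 2 + 1)).coeff (4 * m) = 1 ∧
    (∀ j, 4 * m < j →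
      (∏ i ∈ Finset.range m, ((X : k[X]) ^ 4 - C (lam i) * X ^ 2 + 1)).coeff j = 0) ∧
    (1 ≤ m →
      (∏ i ∈ Finset.range m, ((X : k[X]) ^ 4 - C (lam i) * X ^ 2 + 1)).coeff (4 * m - 1) = 0 ∧
      (∏ i ∈ Finset.range m, ((X : k[X]) ^ 4 - C (lam i) * X ^ 2 + 1)).coeff (4 * m - 2)
        = -(∑ i ∈ Finset.range m, lam i)) := by
  intro m
  induction m with
  | zero =>
    refine ⟨by simp, by simp [coeff_one], by simp [coeff_one], by simp, fun j hj => ?_, by omega⟩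
    simp only [Finset.range_zero, Finset.prod_empty]
    exact coeff_one.trans (by simp; omega)
  | succ m ih =>
    obtain ⟨h0, h1, h2, htop, hvan, hlow⟩ := ih
    rw [Finset.prod_range_succ]
    set Q := ∏ i ∈ Finset.range m, ((X : k[X]) ^ 4 - C (lam i) * X ^ 2 + 1) with hQ
    refine ⟨?_, ?_, ?_, ?_, ?_, ?_⟩
    · rw [aux_coeff_mul]; simp [h0]
    · rw [aux_coeff_mul]; simp [h1]
    · rw [aux_coeff_mul]
      simp only [show ¬ (4 ≤ 2) by omega, if_false, show (2:ℕ) ≤ 2 by omega, if_true]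
      rw [Finset.sum_range_succ]
      rw [h0, h2]; ring
    · rw [aux_coeff_mul]
      have e1 : 4 * (m + 1) - 4 = 4 * m := by omega
      have e2 : (4:ℕ) ≤ 4 * (m+1) := by omega
      have e3 : (2:ℕ) ≤ 4 * (m+1) := by omega
      rw [if_pos e2, if_pos e3, e1, htop, hvan (4 * (m+1) - 2) (by omega),
        hvan (4 * (m+1)) (by omega)]
      ring
    · intro j hj
      rw [aux_coeff_mul]
      rw [if_pos (by omega : 4 ≤ j), if_pos (by omega : 2 ≤ j),
        hvan (j - 4) (by omega), hvan (j - 2) (by omega), hvan j (by omega)]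
      ring
    · intro _
      constructor
      · rw [aux_coeff_mul]
        have e1 : 4 * (m + 1) - 1 = 4 * m + 3 := by omega
        rw [e1]
        rcases Nat.eq_zero_or_pos m with hm | hm
        · subst hm
          simp only [show ¬ (4 ≤ 4 * 0 + 3) by omega, if_false, if_pos (by omega : 2 ≤ 4*0+3)]
          rw [hvan (4 * 0 + 3 - 2) (by omega), hvan (4 * 0 + 3) (by omega)]
          ring
        · rw [if_pos (by omega : 4 ≤ 4 * m + 3), if_pos (by omega : 2 ≤ 4 * m + 3)]
          have e2 : 4 * m + 3 - 4 = 4 * m - 1 := by omega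
          rw [e2, (hlow hm).1, hvan (4 * m + 3 - 2) (by omega), hvan (4 * m + 3) (by omega)]
          ring
      · rw [aux_coeff_mul]
        have e1 : 4 * (m + 1) - 2 = 4 * m + 2 := by omega
        rw [e1, Finset.sum_range_succ]
        rcases Nat.eq_zero_or_pos m with hm | hm
        · subst hm
          simp only [show ¬ (4 ≤ 4 * 0 + 2) by omega, if_false, if_pos (by omega : 2 ≤ 4*0+2)]
          rw [show 4 * 0 + 2 - 2 = 4 * 0 from rfl, htop, hvan (4 * 0 + 2) (by omega)]
          simp
        · rw [if_pos (by omega : 4 ≤ 4 * m + 2), if_pos (by omega : 2 ≤ 4 * m + 2)]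
          have e2 : 4 * m + 2 - 4 = 4 * m - 2 := by omega
          have e3 : 4 * m + 2 - 2 = 4 * m := by omega
          rw [e2, e3, (hlow hm).2, htop, hvan (4 * m + 2) (by omega)]
          ring

lemma aux_rhs_coeff {k : Type*} [Field k] (g : ℕ) (hg : 2 ≤ g) (a : ℕ → k) (d : ℕ)
    (hd : 1 ≤ d) (hdg : d ≤ g) :
    ((X : k[X]) ^ (2 * g + 2) + (∑ i ∈ Finset.Icc 1 g, C (a i) * X ^ (2 * i)) + 1).coeff (2 * d)
      = a d := by
  rw [coeff_add, coeff_add, coeff_X_pow, finset_sum_coeff, coeff_one,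
    if_neg (by omega : ¬ (2 * d = 2 * g + 2)), if_neg (by omega : ¬ (2 * d = 0))]
  have : ∀ i ∈ Finset.Icc 1 g, (C (a i) * X ^ (2 * i)).coeff (2 * d)
      = if i = d then a i else 0 := by
    intro i _
    rw [coeff_C_mul, coeff_X_pow]
    by_cases h : i = d
    · simp [h]
    · rw [if_neg (by omega), if_neg h]; ring
  rw [Finset.sum_congr rfl this, Finset.sum_ite_eq' (Finset.Icc 1 g) d a,
    if_pos (by simp; omega)]
  ring

/-- for `g ≥ 2` even, writing
`(X² + 1)·∏ᵢ (X⁴ − λᵢX² + 1) = X^(2g+2) + a_gX^(2g) + … + a₁X² + 1` and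
`s = λ₁ + … + λₙ`, the dihedral invariants satisfy `u₁ = 2(1−s)^(g+1)`,
`u_g = 2(1−s)²`, hence `2^(g-1)u₁² − u_g^(g+1) = 0`. -/
theorem two_involutions_locus_even_genus {k : Type*} [Field k] [CharZero k]
    (g : ℕ) (hg : 2 ≤ g) (heven : Even g) (n : ℕ) (hn : n = g / 2)
    (lam : ℕ → k) (s : k) (hs : s = ∑ i ∈ Finset.range n, lam i)
    (a : ℕ → k)
    (ha : ((X : k[X]) ^ 2 + 1) * (∏ i ∈ Finset.range n, (X ^ 4 - C (lam i) * X ^ 2 + 1))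
        = X ^ (2 * g + 2) + (∑ i ∈ Finset.Icc 1 g, C (a i) * X ^ (2 * i)) + 1)
    (u₁ ug : k)
    (hu₁ : u₁ = a 1 ^ (g + 1) + a g ^ (g + 1)) (hug : ug = 2 * a 1 * a g) :
    u₁ = 2 * (1 - s) ^ (g + 1) ∧ ug = 2 * (1 - s) ^ 2 ∧
      2 ^ (g - 1) * u₁ ^ 2 - ug ^ (g + 1) = 0 := by
  obtain ⟨r, hr⟩ := heven
  have hgn : g = 2 * n := by omega
  have hn1 : 1 ≤ n := by omega
  obtain ⟨h0, h1, h2, htop, hvan, hlow⟩ := aux_key lam n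
  set Q := ∏ i ∈ Finset.range n, ((X : k[X]) ^ 4 - C (lam i) * X ^ 2 + 1) with hQ
  have hmul : ((X : k[X]) ^ 2 + 1) * Q = Q * X ^ 2 + Q := by ring
  -- coefficient at 2
  have hc2 : (((X : k[X]) ^ 2 + 1) * Q).coeff 2 = 1 - s := by
    rw [hmul, coeff_add, coeff_mul_X_pow', if_pos (by omega : (2:ℕ) ≤ 2)]
    rw [show (2:ℕ) - 2 = 0 from rfl, h0, h2, hs]; ring
  -- coefficient at 2*g
  have hc2g : (((X : k[X]) ^ 2 + 1) * Q).coeff (2 * g) = 1 - s := by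
    rw [hmul, coeff_add, coeff_mul_X_pow', if_pos (by omega : (2:ℕ) ≤ 2 * g)]
    rw [show 2 * g - 2 = 4 * n - 2 by omega, show 2 * g = 4 * n by omega,
      (hlow hn1).2, htop, hs]
    ring
  have ha1 : a 1 = 1 - s := by
    have := congrArg (fun p => Polynomial.coeff p 2) ha
    rw [hc2] at this
    rw [← aux_rhs_coeff g hg a 1 le_rfl (by omega), ← this]
  have hag : a g = 1 - s := by
    have := congrArg (fun p => Polynomial.coeff p (2 * g)) ha
    rw [hc2g] at this
    rw [← aux_rhs_coeff g hg a g (by omega) le_rfl, ← this]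
  have hu1' : u₁ = 2 * (1 - s) ^ (g + 1) := by rw [hu₁, ha1, hag]; ring
  have hug' : ug = 2 * (1 - s) ^ 2 := by rw [hug, ha1, hag]; ring
  refine ⟨hu1', hug', ?_⟩
  rw [hu1', hug']
  have hpow : (2 : k) ^ (g - 1) * 2 ^ 2 = 2 ^ (g + 1) := by
    rw [← pow_add]; congr 1; omega
  calc 2 ^ (g - 1) * (2 * (1 - s) ^ (g + 1)) ^ 2 - (2 * (1 - s) ^ 2) ^ (g + 1)
      = (2 ^ (g - 1) * 2 ^ 2) * (1 - s) ^ ((g + 1) * 2)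
        - 2 ^ (g + 1) * (1 - s) ^ (2 * (g + 1)) := by
        rw [mul_pow, mul_pow, ← pow_mul, ← pow_mul]; ring
    _ = 0 := by rw [hpow, show (g + 1) * 2 = 2 * (g + 1) by ring]; ring
end
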